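/- Let G be a group, S ⊆ G a generating set, and · and : two binary operations on G such that: (i) (gh)·c = g·(h·c), (gh):c = g:(h:c), 1·c = c, 1:c = c for all g, h, c ∈ G; (ii) x·(ab) = ((b:x)·a)(x·b) and x:(ab) = ((b·x):a)(x:b) for all x ∈ S and a, b ∈ G. Then a·(bc) = ((c:a)·b)(a·c) and a:(bc) = ((c·a):b)(a:c) for all a, b, c ∈ G. -/

import Mathlib

/-- If `·` and `:` are left actions of `G` on itself and the compatibility identities hold
with first argument in a monoid-generating set `S`, then they hold for all first arguments. -/
theorem stmt_5 {G : Type*} [Group G] (dot col : G → G → G) (S : Set G)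
    (hdot1 : ∀ c, dot 1 c = c) (hdotm : ∀ g h c, dot (g * h) c = dot g (dot h c))
    (hcol1 : ∀ c, col 1 c = c) (hcolm : ∀ g h c, col (g * h) c = col g (col h c))
    (hS : Submonoid.closure S = ⊤)
    (hSdot : ∀ x ∈ S, ∀ a b : G, dot x (a * b) = dot (col b x) a * dot x b)
    (hScol : ∀ x ∈ S, ∀ a b : G, col x (a * b) = col (dot b x) a * col x b) :
    ∀ a b c : G,
      dot a (b * c) = dot (col c a) b * dot a c ∧ col a (b * c) = col (dot c a) b * col a c := by
  have hmem : ∀ a : G, a ∈ Submonoid.closure S := by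
    intro a; rw [hS]; trivial
  -- dot a 1 = 1 and col a 1 = 1 for all a
  have key1 : ∀ a : G, dot a 1 = 1 ∧ col a 1 = 1 := by
    intro a
    induction hmem a using Submonoid.closure_induction with
    | mem x hx =>
      constructor
      · have h := hSdot x hx 1 1
        rw [mul_one, hcol1] at h
        exact mul_eq_left.mp h.symm
      · have h := hScol x hx 1 1
        rw [mul_one, hdot1] at h
        exact mul_eq_left.mp h.symm
    | one => exact ⟨hdot1 1, hcol1 1⟩
    | mul g h _ _ ihg ihh =>
      refine ⟨?_, ?_⟩
      · rw [hdotm, ihh.1, ihg.1]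
      · rw [hcolm, ihh.2, ihg.2]
  -- main induction on total word length
  have main : ∀ n : ℕ, ∀ a g h : List G,
      (∀ x ∈ a, x ∈ S) → (∀ x ∈ g, x ∈ S) → (∀ x ∈ h, x ∈ S) →
      a.length + g.length + h.length ≤ n →
      dot a.prod (g.prod * h.prod) = dot (col h.prod a.prod) g.prod * dot a.prod h.prod ∧
      col a.prod (g.prod * h.prod) = col (dot h.prod a.prod) g.prod * col a.prod h.prod := by
    intro n
    induction n with
    | zero =>
      intro a g h _ _ _ hlen
      simp only [Nat.le_zero, Nat.add_eq_zero, List.length_eq_zero_iff] at hlen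
      obtain ⟨⟨rfl, rfl⟩, rfl⟩ := hlen
      simp [hdot1, hcol1]
    | succ n ih =>
      intro a g h ha hg hh hlen
      match a with
      | [] =>
        simp [hdot1, hcol1, (key1 h.prod).1, (key1 h.prod).2]
      | x :: k =>
        match g with
        | [] =>
          simp only [List.prod_nil, one_mul]
          constructor
          · rw [(key1 _).1, one_mul]
          · rw [(key1 _).2, one_mul]
        | y :: t =>
          have hx : x ∈ S := ha x (by simp)
          have hk : ∀ z ∈ k, z ∈ S := fun z hz => ha z (by simp [hz])
          have len1 : k.length + (y :: t).length + h.length ≤ n := by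
            simp only [List.length_cons] at hlen ⊢; omega
          have len2 : h.length + [x].length + k.length ≤ n := by
            simp only [List.length_cons, List.length_nil] at hlen ⊢; omega
          have e1 := ih k (y :: t) h hk hg hh len1
          have e2 := ih h [x] k hh (by simpa using hx) hk len2
          simp only [List.prod_singleton] at e2
          set K := k.prod with hK
          set Gv := (y :: t).prod with hGv
          set H := h.prod with hH
          have prodcons : (x :: k).prod = x * K := List.prod_cons
          rw [prodcons]
          constructor
          · calc dot (x * K) (Gv * H)
                = dot x (dot K (Gv * H)) := hdotm _ _ _
              _ = dot x (dot (col H K) Gv * dot K H) := by rw [e1.1]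
              _ = dot (col (dot K H) x) (dot (col H K) Gv) * dot x (dot K H) :=
                  hSdot x hx _ _
              _ = dot (col (dot K H) x * col H K) Gv * dot (x * K) H := by
                  rw [hdotm, hdotm]
              _ = dot (col H (x * K)) Gv * dot (x * K) H := by rw [e2.2]
          · calc col (x * K) (Gv * H)
                = col x (col K (Gv * H)) := hcolm _ _ _
              _ = col x (col (dot H K) Gv * col K H) := by rw [e1.2]
              _ = col (dot (col K H) x) (col (dot H K) Gv) * col x (col K H) :=
                  hScol x hx _ _
              _ = col (dot (col K H) x * dot H K) Gv * col (x * K) H := by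
                  rw [hcolm, hcolm]
              _ = col (dot H (x * K)) Gv * col (x * K) H := by rw [e2.1]
  intro a b c
  obtain ⟨la, hla, hpa⟩ := Submonoid.exists_list_of_mem_closure (hmem a)
  obtain ⟨lb, hlb, hpb⟩ := Submonoid.exists_list_of_mem_closure (hmem b)
  obtain ⟨lc, hlc, hpc⟩ := Submonoid.exists_list_of_mem_closure (hmem c)
  have := main (la.length + lb.length + lc.length) la lb lc hla hlb hlc le_rfl
  rw [hpa, hpb, hpc] at this
  exact this
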